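/- arXiv:2101.01402 — 3 statements merged into one kernel-verified Lean document; each statement's English description precedes it below -/
import Mathlib

section
/- Let η be a chain of torsion classes in an abelian length category A. Then every nonzero object M of A admits a Harder-Narasimhan filtration 0 = M_0 ⊂ M_1 ⊂ ... ⊂ M_n = M with successive quotients M_k/M_{k-1} ∈ P_{r_k} for strictly decreasing parameters r_1 > r_2 > ... > r_n in [0,1], and this filtration is unique up to isomorphism. -/
open CategoryTheory CategoryTheory.Limits

universe w v u u' v' uG

set_option linter.dupNamespace false

namespace TorsionPaper

variable (A : Type u) [Category.{v} A] [Abelian A]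
/-- `0 → X → Y → Z → 0` is a short exact sequence. -/
def SES {X Y Z : A} (f : X ⟶ Y) (g : Y ⟶ Z) : Prop :=
  ∃ h : f ≫ g = 0, (ShortComplex.mk f g h).ShortExact

/-- Exactness at the middle object of `X → Y → Z`. -/
def IsExactAt {X Y Z : A} (f : X ⟶ Y) (g : Y ⟶ Z) : Prop :=
  ∃ h : f ≫ g = 0, (ShortComplex.mk f g h).Exact

/-- A class of objects closed under quotient objects. -/
def ClosedUnderQuotients (T : Set A) : Prop :=
  ∀ ⦃X Y : A⦄ (p : X ⟶ Y), Epi p → X ∈ T → Y ∈ T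

/-- A class of objects closed under extensions. -/
def ClosedUnderExtensions (T : Set A) : Prop :=
  ∀ ⦃X Y Z : A⦄ (f : X ⟶ Y) (g : Y ⟶ Z), SES A f g → X ∈ T → Z ∈ T → Y ∈ T

/-- Torsion classes: full subcategories closed under quotients and extensions. -/
def IsTorsionClass (T : Set A) : Prop :=
  ClosedUnderQuotients A T ∧ ClosedUnderExtensions A T

/-- The right Hom-perpendicular class of a class of objects. -/
def rperp (T : Set A) : Set A := {Y | ∀ X ∈ T, ∀ f : X ⟶ Y, f = 0}

/-- `(T, F)` is a torsion pair: no nonzero maps from `T` to `F`, and every object has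
a short exact sequence with torsion subobject in `T` and torsion-free quotient in `F`. -/
def IsTorsionPair (T F : Set A) : Prop :=
  (∀ X ∈ T, ∀ Y ∈ F, ∀ f : X ⟶ Y, f = 0) ∧
  ∀ M : A, ∃ (tM fM : A) (i : tM ⟶ M) (p : M ⟶ fM),
    tM ∈ T ∧ fM ∈ F ∧ SES A i p

/-- Quotients of objects of `X`. -/
def Fac (X : Set A) : Set A := {Y | ∃ Z ∈ X, ∃ p : Z ⟶ Y, Epi p}

/-- Subobjects of objects of `X`. -/
def SubOf (X : Set A) : Set A := {Y | ∃ Z ∈ X, ∃ i : Y ⟶ Z, Mono i}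

/-- Objects admitting a finite filtration with successive quotients in `Y`. -/
def Filt (Y : Set A) : Set A :=
  {M | ∃ (nn : ℕ) (obj : ℕ → A) (map : ∀ i, obj i ⟶ obj (i + 1)),
    IsZero (obj 0) ∧ obj nn = M ∧
    ∀ i, i < nn → ∃ (Q : A) (p : obj (i + 1) ⟶ Q), Q ∈ Y ∧ SES A (map i) p}

/-- The minimal torsion class containing a class `X` of objects. -/
def TT (X : Set A) : Set A := ⋂₀ {T : Set A | IsTorsionClass A T ∧ X ⊆ T}

/-- `A` is a length category: every object has a well-founded subobject lattice
in both directions. -/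
def IsLengthCategory : Prop :=
  ∀ X : A, WellFoundedLT (Subobject X) ∧ WellFoundedGT (Subobject X)

/-- The set of torsion subobjects (with respect to the torsion class `T`)
of objects of `MM`; this is the class `tMM = {tM : M ∈ MM}`. -/
def torsObjs (T MM : Set A) : Set A :=
  {Y | ∃ (X : A) (_ : X ∈ MM) (i : Y ⟶ X) (F : A) (p : X ⟶ F),
    Y ∈ T ∧ F ∈ rperp A T ∧ SES A i p}

/-- The set of torsion-free quotients (with respect to the torsion class `T`)
of objects of `MM`; this is the class `fMM = {coker (tM ↪ M) : M ∈ MM}`. -/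
def freeQuots (T MM : Set A) : Set A :=
  {F | ∃ (X : A) (_ : X ∈ MM) (Y : A) (i : Y ⟶ X) (p : X ⟶ F),
    Y ∈ T ∧ F ∈ rperp A T ∧ SES A i p}

/-- Contravariantly finite subcategory: every object has a right approximation. -/
def ContravariantlyFinite (X : Set A) : Prop :=
  ∀ C : A, ∃ (M : A) (_ : M ∈ X) (π : M ⟶ C),
    ∀ M' : A, M' ∈ X → ∀ π' : M' ⟶ C, ∃ f : M' ⟶ M, f ≫ π = π'

/-- Covariantly finite subcategory: every object has a left approximation. -/
def CovariantlyFinite (X : Set A) : Prop :=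
  ∀ C : A, ∃ (M : A) (_ : M ∈ X) (ι : C ⟶ M),
    ∀ M' : A, M' ∈ X → ∀ ι' : C ⟶ M', ∃ f : M ⟶ M', ι ≫ f = ι'

/-- Functorially finite subcategory. -/
def FunctoriallyFinite (X : Set A) : Prop :=
  ContravariantlyFinite A X ∧ CovariantlyFinite A X

/-- The union `⋃_{r > s} δ r`. -/
def unionGT (δ : unitInterval → Set A) (s : unitInterval) : Set A :=
  ⋃ (r : unitInterval) (_ : s < r), δ r

/-- The union `⋃_{r > s} δ r`, with the convention that it contains the zero
objects (so that at `s = 1` it is `{0}`). -/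
def unionGTc (δ : unitInterval → Set A) (s : unitInterval) : Set A :=
  {Z : A | IsZero Z} ∪ unionGT A δ s

/-- The intersection `⋂_{r < s} δ r`. -/
def interLT (δ : unitInterval → Set A) (s : unitInterval) : Set A :=
  ⋂ (r : unitInterval) (_ : r < s), δ r

/-- The intersection `⋂_{r < s} δ r` with the convention that at `s = 0` it is `MM`. -/
def interLTc (MM : Set A) (δ : unitInterval → Set A) (s : unitInterval) : Set A :=
  MM ∩ interLT A δ s

/-- A chain of torsion classes indexed by `[0,1]`: `T_0 = A`, `T_1 = {0}`,
order-reversing. -/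
def IsChainOfTorsionClasses (η : unitInterval → Set A) : Prop :=
  (∀ s, IsTorsionClass A (η s)) ∧ η 0 = Set.univ ∧ η 1 = {Z : A | IsZero Z} ∧
  ∀ r s : unitInterval, r ≤ s → η s ⊆ η r

/-- The slice `P_t` of a chain of torsion classes `η`: torsion-free quotients
(with respect to the torsion class `⋃_{s>t} η s`) of the objects of
`S_t = (⋂_{s<t} η s) \ (⋃_{s>t} η s)`. -/
def sliceP (η : unitInterval → Set A) (t : unitInterval) : Set A :=
  {Q | ∃ (M tM : A) (ι : tM ⟶ M) (p : M ⟶ Q),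
    M ∈ interLT A η t ∧ M ∉ unionGTc A η t ∧
    tM ∈ unionGTc A η t ∧ Q ∈ rperp A (unionGTc A η t) ∧ SES A ι p}

/-- `(r, obj, map, t)` is a Harder-Narasimhan filtration of `X` with respect to the
chain of torsion classes `η`: a filtration `0 = obj 0 ⊆ obj 1 ⊆ ... ⊆ obj r = X` whose
successive quotients lie in the slices `P_{t i}` with `t` strictly decreasing. -/
def IsHNFiltration (η : unitInterval → Set A) (X : A)
    (r : ℕ) (obj : ℕ → A) (map : ∀ i, obj i ⟶ obj (i + 1)) (t : ℕ → unitInterval) : Prop :=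
  IsZero (obj 0) ∧ obj r = X ∧
  (∀ i j, i < j → j < r → t j < t i) ∧
  ∀ i, i < r → ∃ (Q : A) (p : obj (i + 1) ⟶ Q), Q ∈ sliceP A η (t i) ∧ SES A (map i) p


section Aux
variable {A}


lemma SES.mono {X Y Z : A} {f : X ⟶ Y} {g : Y ⟶ Z} (h : SES A f g) : Mono f :=
  h.choose_spec.mono_f

lemma SES.epi {X Y Z : A} {f : X ⟶ Y} {g : Y ⟶ Z} (h : SES A f g) : Epi g :=
  h.choose_spec.epi_g

lemma SES.zero {X Y Z : A} {f : X ⟶ Y} {g : Y ⟶ Z} (h : SES A f g) : f ≫ g = 0 := h.choose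

/-- `f` is a kernel of `g`. -/
noncomputable def SES.fIsKernel {X Y Z : A} {f : X ⟶ Y} {g : Y ⟶ Z} (h : SES A f g) :
    IsLimit (KernelFork.ofι f h.zero) := by
  have := h.choose_spec.mono_f
  exact h.choose_spec.exact.fIsKernel

noncomputable def SES.gIsCokernel {X Y Z : A} {f : X ⟶ Y} {g : Y ⟶ Z} (h : SES A f g) :
    IsColimit (CokernelCofork.ofπ g h.zero) := by
  have := h.choose_spec.epi_g
  exact h.choose_spec.exact.gIsCokernel

lemma isZero_of_epi_of_isZero {X Y : A} (p : X ⟶ Y) (hp : Epi p) (h : IsZero X) : IsZero Y := by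
  rw [IsZero.iff_id_eq_zero]
  have : p ≫ 𝟙 Y = p ≫ 0 := by simp [h.eq_of_src p 0]
  exact (cancel_epi (f := p)).mp this

lemma SES.isIso_f_of_isZero {X Y Z : A} {f : X ⟶ Y} {g : Y ⟶ Z} (h : SES A f g)
    (hZ : IsZero Z) : IsIso f := by
  have hm := h.mono
  have hg : g = 0 := hZ.eq_of_tgt g 0
  have : Epi f := by
    refine Preadditive.epi_of_cancel_zero _ (fun {W} u hu => ?_)
    obtain ⟨d, hd⟩ := CokernelCofork.IsColimit.desc' h.gIsCokernel u hu
    have h2 : u = g ≫ d := by simpa using hd.symm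
    rw [h2, hg, zero_comp]
  exact isIso_of_mono_of_epi f

lemma SES.isIso_g_of_isZero {X Y Z : A} {f : X ⟶ Y} {g : Y ⟶ Z} (h : SES A f g)
    (hX : IsZero X) : IsIso g := by
  have he := h.epi
  have : Mono g := by
    refine Preadditive.mono_of_cancel_zero _ (fun {W} u hu => ?_)
    obtain ⟨d, hd⟩ := KernelFork.IsLimit.lift' h.fIsKernel u hu
    have h2 : u = d ≫ f := by simpa using hd.symm
    rw [h2]
    simp only [hX.eq_of_src f (0 : X ⟶ Y), comp_zero]
  exact isIso_of_mono_of_epi g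

lemma SES.isZero_of_isIso_f {X Y Z : A} {f : X ⟶ Y} {g : Y ⟶ Z} (h : SES A f g)
    (hf : IsIso f) : IsZero Z := by
  have hg : g = 0 := by
    have := h.zero
    calc g = inv f ≫ (f ≫ g) := by simp
    _ = 0 := by rw [this, comp_zero]
  have he := h.epi
  rw [IsZero.iff_id_eq_zero]
  have : g ≫ 𝟙 Z = g ≫ 0 := by simp [hg]
  exact (cancel_epi (f := g)).mp this

lemma ses_cokernel {X Y : A} (f : X ⟶ Y) [Mono f] : SES A f (cokernel.π f) :=
  ⟨cokernel.condition f,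
   { exact := ShortComplex.exact_of_g_is_cokernel _ (cokernelIsCokernel f) }⟩

lemma ses_kernel {X Y : A} (f : X ⟶ Y) [Epi f] : SES A (kernel.ι f) f :=
  ⟨kernel.condition f,
   { exact := ShortComplex.exact_of_f_is_kernel _ (kernelIsKernel f) }⟩

lemma ses_biprod (X Y : A) : SES A (biprod.inl : X ⟶ X ⊞ Y) (biprod.snd) :=
  ⟨by simp, (ShortComplex.Splitting.ofHasBinaryBiproduct X Y).shortExact⟩

lemma ses_of_iso {X X' Y Y' Z Z' : A} (e1 : X ≅ X') (e2 : Y ≅ Y') (e3 : Z ≅ Z')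
    {f : X ⟶ Y} {g : Y ⟶ Z} (h : SES A f g) :
    SES A (e1.inv ≫ f ≫ e2.hom) (e2.inv ≫ g ≫ e3.hom) := by
  obtain ⟨w, hw⟩ := h
  have hzero : (e1.inv ≫ f ≫ e2.hom) ≫ (e2.inv ≫ g ≫ e3.hom) = 0 := by
    simp [reassoc_of% w]
  refine ⟨hzero, ?_⟩
  have e : ShortComplex.mk f g w ≅ ShortComplex.mk _ _ hzero :=
    ShortComplex.isoMk e1 e2 e3 (by simp) (by simp)
  exact ShortComplex.shortExact_of_iso e hw


lemma closed_iso {T : Set A} (hQ : ClosedUnderQuotients A T) {X Y : A} (e : X ≅ Y)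
    (hX : X ∈ T) : Y ∈ T := hQ e.hom inferInstance hX

lemma exists_torsion_subobject {T : Set A} (hQ : ClosedUnderQuotients A T)
    (hE : ClosedUnderExtensions A T) (hz : ∀ Z : A, IsZero Z → Z ∈ T)
    (M : A) [WellFoundedGT (Subobject M)] :
    ∃ N : Subobject M, ((N : A) ∈ T ∧ cokernel N.arrow ∈ rperp A T) := by
  classical
  set S : Set (Subobject M) := {N | (N : A) ∈ T} with hS
  have hbot : (⊥ : Subobject M) ∈ S := hz _ ((isZero_zero A).of_iso Subobject.botCoeIsoZero)
  obtain ⟨m, hm, hmax⟩ := (IsWellFounded.wf (r := ((· > ·) : Subobject M → Subobject M → Prop))).has_min S ⟨⊥, hbot⟩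
  -- m is a maximum of S
  have hmax' : ∀ N : Subobject M, (N : A) ∈ T → N ≤ m := by
    intro N hN
    set k : ((N : A) ⊞ (m : A)) ⟶ M := biprod.desc N.arrow m.arrow with hk
    have hb : (((N : A) ⊞ (m : A) : A)) ∈ T := hE _ _ (ses_biprod _ _) hN hm
    have himg : (imageSubobject k : A) ∈ T :=
      closed_iso hQ (imageSubobjectIso k).symm (hQ (factorThruImage k) inferInstance hb)
    have hmI : m ≤ imageSubobject k := by
      refine Subobject.le_of_comm ((biprod.inr ≫ factorThruImage k) ≫ (imageSubobjectIso k).inv) ?_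
      simp [imageSubobject_arrow', hk]
    have heq : m = imageSubobject k := by
      by_contra hne
      exact hmax _ himg (lt_of_le_of_ne hmI hne)
    have hNI : N ≤ imageSubobject k := by
      refine Subobject.le_of_comm ((biprod.inl ≫ factorThruImage k) ≫ (imageSubobjectIso k).inv) ?_
      simp [imageSubobject_arrow', hk]
    rwa [← heq] at hNI
  refine ⟨m, hm, ?_⟩
  intro X hX f
  -- image of f
  set ι : image f ⟶ cokernel m.arrow := image.ι f
  have hIf : image f ∈ T := hQ (factorThruImage f) inferInstance hX
  set P := pullback ι (cokernel.π m.arrow) with hP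
  have hfstepi : Epi (pullback.fst ι (cokernel.π m.arrow)) := inferInstance
  have hsndmono : Mono (pullback.snd ι (cokernel.π m.arrow)) := inferInstance
  -- the canonical map from m to P
  have hl0 : (0 : (m : A) ⟶ image f) ≫ ι = m.arrow ≫ cokernel.π m.arrow := by simp
  set l : (m : A) ⟶ P := pullback.lift 0 m.arrow hl0 with hl
  -- kernel of fst is iso to m
  set K := kernel (pullback.fst ι (cokernel.π m.arrow)) with hK
  have hw : (kernel.ι (pullback.fst ι (cokernel.π m.arrow)) ≫ pullback.snd ι (cokernel.π m.arrow)) ≫ cokernel.π m.arrow = 0 := by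
    rw [Category.assoc, ← pullback.condition, ← Category.assoc, kernel.condition, zero_comp]
  have hmker := Abelian.monoIsKernelOfCokernel
    (CokernelCofork.ofπ _ (cokernel.condition m.arrow)) (cokernelIsCokernel m.arrow)
  obtain ⟨e, he0⟩ := KernelFork.IsLimit.lift' hmker _ hw
  have he : e ≫ m.arrow = kernel.ι (pullback.fst ι (cokernel.π m.arrow)) ≫ pullback.snd ι (cokernel.π m.arrow) := by
    simpa using he0
  have hlfst : l ≫ pullback.fst ι (cokernel.π m.arrow) = 0 := by rw [hl]; exact pullback.lift_fst _ _ _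
  set u : (m : A) ⟶ K := kernel.lift _ l hlfst with hu
  have hue : u ≫ e = 𝟙 _ := by
    rw [← cancel_mono m.arrow]
    simp only [Category.assoc, Category.id_comp]
    rw [he]
    simp [hu, hl]
    exact pullback.lift_snd _ _ _
  have heu : e ≫ u = 𝟙 _ := by
    rw [← cancel_mono (kernel.ι (pullback.fst ι (cokernel.π m.arrow))), ← cancel_mono (pullback.snd ι (cokernel.π m.arrow))]
    simp only [Category.assoc, Category.id_comp]
    rw [hu]
    simp only [kernel.lift_ι_assoc]
    rw [hl]
    simp only [pullback.lift_snd]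
    exact he
  have hKiso : K ≅ (m : A) := ⟨e, u, heu, hue⟩
  have hKT : K ∈ T := closed_iso hQ hKiso.symm hm
  have hPT : P ∈ T := by
    have := ses_kernel (pullback.fst ι (cokernel.π m.arrow))
    exact hE _ _ this hKT hIf
  -- P gives a subobject of M contained in m
  have hsub : Subobject.mk (pullback.snd ι (cokernel.π m.arrow)) ≤ m := by
    apply hmax'
    exact closed_iso hQ (Subobject.underlyingIso _).symm hPT
  have hfac := Subobject.ofMkLE_arrow hsub
  have : pullback.snd ι (cokernel.π m.arrow) ≫ cokernel.π m.arrow = 0 := by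
    rw [← hfac, Category.assoc, cokernel.condition, comp_zero]
  have hι : ι = 0 := by
    have h2 : pullback.fst ι (cokernel.π m.arrow) ≫ ι = 0 := by
      rw [pullback.condition, this]
    rwa [← cancel_epi (pullback.fst ι (cokernel.π m.arrow)), comp_zero]
  rw [← image.fac f, show image.ι f = 0 from hι, comp_zero]

section Chain
variable (η : unitInterval → Set A) (hη : IsChainOfTorsionClasses A η)
include hη

lemma zeros_mem_eta (s : unitInterval) : ∀ Z : A, IsZero Z → Z ∈ η s := by
  intro Z hZ
  have h1 : η 1 ⊆ η s := hη.2.2.2 s 1 (by exact_mod_cast s.2.2)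
  exact h1 (by rw [hη.2.2.1]; exact hZ)

omit hη in
lemma mem_unionGTc_iff (s : unitInterval) (Z : A) :
    Z ∈ unionGTc A η s ↔ IsZero Z ∨ ∃ r, s < r ∧ Z ∈ η r := by
  simp [unionGTc, unionGT]

lemma uGTc_quot (s : unitInterval) : ClosedUnderQuotients A (unionGTc A η s) := by
  intro X Y p hp hX
  rw [mem_unionGTc_iff] at hX ⊢
  rcases hX with h | ⟨r, hr, hmem⟩
  · exact Or.inl (isZero_of_epi_of_isZero p hp h)
  · exact Or.inr ⟨r, hr, (hη.1 r).1 p hp hmem⟩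

lemma uGTc_ext (s : unitInterval) : ClosedUnderExtensions A (unionGTc A η s) := by
  intro X Y Z f g hses hX hZ
  rw [mem_unionGTc_iff] at hX hZ ⊢
  rcases hX with hX | ⟨r₁, hr₁, hm₁⟩ <;> rcases hZ with hZ | ⟨r₂, hr₂, hm₂⟩
  · left
    haveI := hses.isIso_g_of_isZero hX
    exact hZ.of_iso (asIso g)
  · right
    haveI := hses.isIso_g_of_isZero hX
    exact ⟨r₂, hr₂, closed_iso (hη.1 r₂).1 (asIso g).symm hm₂⟩
  · right
    haveI := hses.isIso_f_of_isZero hZ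
    exact ⟨r₁, hr₁, closed_iso (hη.1 r₁).1 (asIso f) hm₁⟩
  · right
    refine ⟨min r₁ r₂, lt_min hr₁ hr₂, ?_⟩
    exact (hη.1 _).2 f g hses (hη.2.2.2 _ r₁ (min_le_left _ _) hm₁)
      (hη.2.2.2 _ r₂ (min_le_right _ _) hm₂)

lemma uGTc_zeros (s : unitInterval) : ∀ Z : A, IsZero Z → Z ∈ unionGTc A η s :=
  fun Z hZ => Or.inl hZ

variable {η}

private lemma rho_set_nonempty (M : A) :
    (((↑) '' {s : unitInterval | M ∈ η s}) : Set ℝ).Nonempty :=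
  ⟨0, ⟨0, by simp only [Set.mem_setOf_eq, hη.2.1, Set.mem_univ], rfl⟩⟩

private lemma rho_set_bdd (M : A) : BddAbove (((↑) '' {s : unitInterval | M ∈ η s}) : Set ℝ) :=
  ⟨1, by rintro x ⟨y, _, rfl⟩; exact y.2.2⟩

/-- The HN parameter of an object. -/
noncomputable def rho (M : A) : unitInterval :=
  ⟨sSup (((↑) '' {s : unitInterval | M ∈ η s}) : Set ℝ),
    le_csSup (rho_set_bdd hη M) ⟨0, by simp only [Set.mem_setOf_eq, hη.2.1, Set.mem_univ], rfl⟩,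
    csSup_le (rho_set_nonempty hη M) (by rintro x ⟨y, _, rfl⟩; exact y.2.2)⟩

lemma le_rho {M : A} {s : unitInterval} (h : M ∈ η s) : s ≤ rho hη M := by
  have : (s : ℝ) ≤ (rho hη M : ℝ) := le_csSup (rho_set_bdd hη M) ⟨s, h, rfl⟩
  exact_mod_cast this

lemma mem_of_lt_rho {M : A} {s : unitInterval} (h : s < rho hη M) : M ∈ η s := by
  have h' : (s : ℝ) < sSup (((↑) '' {s : unitInterval | M ∈ η s}) : Set ℝ) := h
  obtain ⟨x, ⟨a, ha, rfl⟩, hx⟩ := exists_lt_of_lt_csSup (rho_set_nonempty hη M) h'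
  exact hη.2.2.2 s a (le_of_lt (by exact_mod_cast hx)) ha

lemma mem_interLT_rho (M : A) : M ∈ interLT A η (rho hη M) := by
  simp only [interLT, Set.mem_iInter]
  intro r hr
  exact mem_of_lt_rho hη hr

lemma not_mem_unionGTc_rho {M : A} (hM : ¬ IsZero M) : M ∉ unionGTc A η (rho hη M) := by
  rw [mem_unionGTc_iff]
  rintro (h | ⟨r, hr, hmem⟩)
  · exact hM h
  · exact absurd (le_rho hη hmem) (not_le.mpr hr)

lemma rho_congr {M N : A} (e : M ≅ N) : rho hη M = rho hη N := by
  have hset : {s : unitInterval | M ∈ η s} = {s | N ∈ η s} := by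
    ext s
    exact ⟨fun h => closed_iso (hη.1 s).1 e h, fun h => closed_iso (hη.1 s).1 e.symm h⟩
  exact Subtype.ext (by simp only [rho, hset])

lemma sliceP_nonzero {t : unitInterval} {Q : A} (h : Q ∈ sliceP A η t) : ¬ IsZero Q := by
  obtain ⟨M, tM, ι, p, _, hM2, htM, _, hses⟩ := h
  intro hz
  haveI := hses.isIso_f_of_isZero hz
  exact hM2 (uGTc_quot η hη t ι inferInstance htM)

lemma sliceP_hom_zero {t t' : unitInterval} {Q Q' : A} (hQ : Q ∈ sliceP A η t)
    (hQ' : Q' ∈ sliceP A η t') (hlt : t' < t) (f : Q ⟶ Q') : f = 0 := by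
  obtain ⟨M, tM, ι, p, hM1, _, _, _, hses⟩ := hQ
  obtain ⟨M', tM', ι', p', _, _, _, hperp, _⟩ := hQ'
  obtain ⟨s, hs1, hs2⟩ := exists_between hlt
  simp only [interLT, Set.mem_iInter] at hM1
  have hQs : Q ∈ η s := (hη.1 s).1 p hses.epi (hM1 s hs2)
  exact hperp Q (Or.inr (Set.mem_iUnion.mpr ⟨s, Set.mem_iUnion.mpr ⟨hs1, hQs⟩⟩)) f

end Chain

section Filt

/-- The composite map from a filtration stage to stage `r`. -/
noncomputable def incl {obj : ℕ → A} (map : ∀ i, obj i ⟶ obj (i + 1)) (r : ℕ) :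
    ∀ i : ℕ, obj i ⟶ obj r := fun i =>
  if h : i < r then map i ≫ incl map r (i + 1)
  else if h' : i = r then eqToHom (congrArg obj h') else 0
termination_by i => r - i
decreasing_by omega

lemma incl_self {obj : ℕ → A} (map : ∀ i, obj i ⟶ obj (i + 1)) (r : ℕ) :
    incl map r r = 𝟙 (obj r) := by
  rw [incl]
  simp

lemma incl_of_lt {obj : ℕ → A} (map : ∀ i, obj i ⟶ obj (i + 1)) {r i : ℕ} (h : i < r) :
    incl map r i = map i ≫ incl map r (i + 1) := by
  rw [incl]
  simp [h]

/-- The composite map from a filtration stage to the top object. -/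
noncomputable def inclX {X : A} {obj : ℕ → A} (map : ∀ i, obj i ⟶ obj (i + 1)) (r : ℕ)
    (hX : obj r = X) (i : ℕ) : obj i ⟶ X :=
  incl map r i ≫ eqToHom hX

lemma inclX_self {X : A} {obj : ℕ → A} (map : ∀ i, obj i ⟶ obj (i + 1)) (r : ℕ)
    (hX : obj r = X) : inclX map r hX r = eqToHom hX := by
  rw [inclX, incl_self, Category.id_comp]

lemma inclX_of_lt {X : A} {obj : ℕ → A} (map : ∀ i, obj i ⟶ obj (i + 1)) {r : ℕ}
    (hX : obj r = X) {i : ℕ} (h : i < r) :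
    inclX map r hX i = map i ≫ inclX map r hX (i + 1) := by
  rw [inclX, incl_of_lt map h, Category.assoc, inclX]

lemma incl_mono {obj : ℕ → A} (map : ∀ i, obj i ⟶ obj (i + 1)) {r : ℕ}
    (hmono : ∀ i, i < r → Mono (map i)) :
    ∀ (k i : ℕ), i + k = r → Mono (incl map r i) := by
  intro k
  induction k with
  | zero =>
    intro i hi
    simp only [Nat.add_zero] at hi
    subst hi
    rw [incl_self]
    infer_instance
  | succ n ih =>
    intro i hi
    have hlt : i < r := by omega
    rw [incl_of_lt map hlt]
    haveI := hmono i hlt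
    haveI := ih (i + 1) (by omega)
    exact mono_comp _ _

lemma inclX_mono {X : A} {obj : ℕ → A} (map : ∀ i, obj i ⟶ obj (i + 1)) {r : ℕ}
    (hX : obj r = X) (hmono : ∀ i, i < r → Mono (map i)) {i : ℕ} (hi : i ≤ r) :
    Mono (inclX map r hX i) := by
  rw [inclX]
  haveI := incl_mono map hmono (r - i) i (by omega)
  exact mono_comp _ _

/-- Extract choice functions for the quotients from an HN filtration. -/
lemma hn_data {η : unitInterval → Set A} {X : A} {r : ℕ} {obj : ℕ → A}
    {map : ∀ i, obj i ⟶ obj (i + 1)} {t : ℕ → unitInterval}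
    (h : IsHNFiltration A η X r obj map t) :
    ∃ (Q : ℕ → A) (p : ∀ i, obj (i + 1) ⟶ Q i),
      ∀ i, i < r → (Q i ∈ sliceP A η (t i) ∧ SES A (map i) (p i)) := by
  have h4 := h.2.2.2
  have : ∀ i : ℕ, ∃ (Q : A) (p : obj (i + 1) ⟶ Q), i < r →
      (Q ∈ sliceP A η (t i) ∧ SES A (map i) p) := by
    intro i
    by_cases hi : i < r
    · obtain ⟨Q, p, hQ, hses⟩ := h4 i hi
      exact ⟨Q, p, fun _ => ⟨hQ, hses⟩⟩
    · exact ⟨obj (i + 1), 𝟙 _, fun h => absurd h hi⟩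
  choose Q p hQp using this
  exact ⟨Q, p, fun i hi => hQp i hi⟩

lemma filt_lift {obj : ℕ → A} {map : ∀ i, obj i ⟶ obj (i + 1)} {r : ℕ}
    {Q : ℕ → A} {p : ∀ i, obj (i + 1) ⟶ Q i}
    (hses : ∀ i, i < r → SES A (map i) (p i)) {W : A} (k : ℕ) :
    ∀ m, k ≤ m → m ≤ r → (∀ j, k ≤ j → j < m → ∀ g : W ⟶ Q j, g = 0) →
      ∀ u : W ⟶ obj m, ∃ v : W ⟶ obj k, v ≫ incl map r k = u ≫ incl map r m := by
  intro m hkm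
  induction m, hkm using Nat.le_induction with
  | base => exact fun _ _ u => ⟨u, rfl⟩
  | succ n hkn ih =>
    intro hnr hvan u
    have hn : n < r := by omega
    have hup : u ≫ p n = 0 := hvan n hkn (by omega) _
    obtain ⟨u', hu'⟩ := KernelFork.IsLimit.lift' (hses n hn).fIsKernel u hup
    have hu'' : u' ≫ map n = u := by simpa using hu'
    obtain ⟨v, hv⟩ := ih (by omega) (fun j hj hj' g => hvan j hj (by omega) g) u'
    refine ⟨v, ?_⟩
    rw [hv, incl_of_lt map hn, ← Category.assoc, hu'']

lemma filt_vanish {obj : ℕ → A} {map : ∀ i, obj i ⟶ obj (i + 1)} {r : ℕ}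
    {Q : ℕ → A} {p : ∀ i, obj (i + 1) ⟶ Q i} (h0 : IsZero (obj 0))
    (hses : ∀ i, i < r → SES A (map i) (p i)) {W : A} :
    ∀ m, m ≤ r → (∀ j, j < m → ∀ g : Q j ⟶ W, g = 0) → ∀ g : obj m ⟶ W, g = 0 := by
  intro m
  induction m with
  | zero => exact fun _ _ g => h0.eq_of_src g 0
  | succ n ih =>
    intro hnr hvan g
    have hn : n < r := by omega
    have hmg : map n ≫ g = 0 := ih (by omega) (fun j hj => hvan j (by omega)) _
    obtain ⟨d, hd⟩ := CokernelCofork.IsColimit.desc' (hses n hn).gIsCokernel g hmg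
    have hd' : p n ≫ d = g := by simpa using hd
    rw [← hd', hvan n (by omega) d, comp_zero]

end Filt

section Uniq
variable {η : unitInterval → Set A} (hη : IsChainOfTorsionClasses A η)
include hη

lemma key_step {X : A} {r₁ r₂ : ℕ} {obj₁ obj₂ : ℕ → A}
    {map₁ : ∀ i, obj₁ i ⟶ obj₁ (i + 1)} {map₂ : ∀ i, obj₂ i ⟶ obj₂ (i + 1)}
    {t₁ t₂ : ℕ → unitInterval}
    (h₁ : IsHNFiltration A η X r₁ obj₁ map₁ t₁) (h₂ : IsHNFiltration A η X r₂ obj₂ map₂ t₂)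
    (Q₁ : ℕ → A) (p₁ : ∀ i, obj₁ (i + 1) ⟶ Q₁ i)
    (hd₁ : ∀ i, i < r₁ → Q₁ i ∈ sliceP A η (t₁ i) ∧ SES A (map₁ i) (p₁ i))
    (Q₂ : ℕ → A) (p₂ : ∀ i, obj₂ (i + 1) ⟶ Q₂ i)
    (hd₂ : ∀ i, i < r₂ → Q₂ i ∈ sliceP A η (t₂ i) ∧ SES A (map₂ i) (p₂ i))
    (i : ℕ) (hi₁ : i < r₁) (hi₂ : i < r₂) (φ : obj₁ i ≅ obj₂ i)
    (hφ : φ.hom ≫ inclX map₂ r₂ h₂.2.1 i = inclX map₁ r₁ h₁.2.1 i)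
    (hlt : t₂ i < t₁ i) : False := by
  have hX₁ : obj₁ r₁ = X := h₁.2.1
  have hX₂ : obj₂ r₂ = X := h₂.2.1
  have hm₁ : ∀ a, a < r₁ → Mono (map₁ a) := fun a ha => (hd₁ a ha).2.mono
  have hm₂ : ∀ a, a < r₂ → Mono (map₂ a) := fun a ha => (hd₂ a ha).2.mono
  have hvan : ∀ j, i ≤ j → j < r₂ → ∀ g : obj₁ (i + 1) ⟶ Q₂ j, g = 0 := by
    intro j hj hjr g
    refine filt_vanish h₁.1 (fun a ha => (hd₁ a ha).2) (i + 1) hi₁ ?_ g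
    intro k hk g'
    refine sliceP_hom_zero hη (hd₁ k (by omega)).1 (hd₂ j hjr).1 ?_ g'
    have ht1 : t₂ j ≤ t₂ i := by
      rcases Nat.eq_or_lt_of_le hj with h | h
      · rw [← h]
      · exact le_of_lt (h₂.2.2.1 i j h hjr)
    have ht2 : t₁ i ≤ t₁ k := by
      rcases Nat.eq_or_lt_of_le (Nat.lt_succ_iff.mp hk) with h | h
      · rw [h]
      · exact le_of_lt (h₁.2.2.1 k i h hi₁)
    exact lt_of_le_of_lt ht1 (lt_of_lt_of_le hlt ht2)
  obtain ⟨v, hv⟩ := filt_lift (fun a ha => (hd₂ a ha).2) i r₂ (le_of_lt hi₂) (le_refl r₂)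
    hvan (inclX map₁ r₁ hX₁ (i + 1) ≫ eqToHom hX₂.symm)
  have hv' : v ≫ inclX map₂ r₂ hX₂ i = inclX map₁ r₁ hX₁ (i + 1) := by
    rw [inclX, ← Category.assoc, hv, incl_self]
    simp
  haveI hmI₂ := inclX_mono map₂ hX₂ hm₂ (le_of_lt hi₂)
  haveI hmI₁ := inclX_mono map₁ hX₁ hm₁ (Nat.succ_le_of_lt hi₁)
  have hmv : map₁ i ≫ v = φ.hom := by
    apply (cancel_mono (inclX map₂ r₂ hX₂ i)).mp
    rw [Category.assoc, hv', ← inclX_of_lt map₁ hX₁ hi₁, hφ]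
  have hinv : φ.inv ≫ inclX map₁ r₁ hX₁ i = inclX map₂ r₂ hX₂ i := by
    rw [← hφ, ← Category.assoc, φ.inv_hom_id, Category.id_comp]
  have h1 : map₁ i ≫ (v ≫ φ.inv) = 𝟙 _ := by
    rw [← Category.assoc, hmv, φ.hom_inv_id]
  have h2 : (v ≫ φ.inv) ≫ map₁ i = 𝟙 _ := by
    apply (cancel_mono (inclX map₁ r₁ hX₁ (i + 1))).mp
    rw [Category.assoc, ← inclX_of_lt map₁ hX₁ hi₁, Category.assoc, hinv, hv',
      Category.id_comp]
  haveI : IsIso (map₁ i) := ⟨v ≫ φ.inv, h1, h2⟩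
  exact sliceP_nonzero hη (hd₁ i hi₁).1 ((hd₁ i hi₁).2.isZero_of_isIso_f this)

lemma step_iso {X : A} {r₁ r₂ : ℕ} {obj₁ obj₂ : ℕ → A}
    {map₁ : ∀ i, obj₁ i ⟶ obj₁ (i + 1)} {map₂ : ∀ i, obj₂ i ⟶ obj₂ (i + 1)}
    {t₁ t₂ : ℕ → unitInterval}
    (h₁ : IsHNFiltration A η X r₁ obj₁ map₁ t₁) (h₂ : IsHNFiltration A η X r₂ obj₂ map₂ t₂)
    (Q₁ : ℕ → A) (p₁ : ∀ i, obj₁ (i + 1) ⟶ Q₁ i)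
    (hd₁ : ∀ i, i < r₁ → Q₁ i ∈ sliceP A η (t₁ i) ∧ SES A (map₁ i) (p₁ i))
    (Q₂ : ℕ → A) (p₂ : ∀ i, obj₂ (i + 1) ⟶ Q₂ i)
    (hd₂ : ∀ i, i < r₂ → Q₂ i ∈ sliceP A η (t₂ i) ∧ SES A (map₂ i) (p₂ i))
    (i : ℕ) (hi₁ : i < r₁) (hi₂ : i < r₂) (heq : t₁ i = t₂ i) :
    ∃ ψ : obj₁ (i + 1) ⟶ obj₂ (i + 1),
      ψ ≫ inclX map₂ r₂ h₂.2.1 (i + 1) = inclX map₁ r₁ h₁.2.1 (i + 1) := by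
  have hX₁ : obj₁ r₁ = X := h₁.2.1
  have hX₂ : obj₂ r₂ = X := h₂.2.1
  have hvan : ∀ j, i + 1 ≤ j → j < r₂ → ∀ g : obj₁ (i + 1) ⟶ Q₂ j, g = 0 := by
    intro j hj hjr g
    refine filt_vanish h₁.1 (fun a ha => (hd₁ a ha).2) (i + 1) hi₁ ?_ g
    intro k hk g'
    refine sliceP_hom_zero hη (hd₁ k (by omega)).1 (hd₂ j hjr).1 ?_ g'
    have ht1 : t₂ j < t₂ i := h₂.2.2.1 i j (by omega) hjr
    have ht2 : t₁ i ≤ t₁ k := by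
      rcases Nat.eq_or_lt_of_le (Nat.lt_succ_iff.mp hk) with h | h
      · rw [h]
      · exact le_of_lt (h₁.2.2.1 k i h hi₁)
    rw [heq] at ht2
    exact lt_of_lt_of_le ht1 (heq ▸ ht2)
  obtain ⟨v, hv⟩ := filt_lift (fun a ha => (hd₂ a ha).2) (i + 1) r₂ hi₂ (le_refl r₂)
    hvan (inclX map₁ r₁ hX₁ (i + 1) ≫ eqToHom hX₂.symm)
  refine ⟨v, ?_⟩
  rw [inclX, ← Category.assoc, hv, incl_self]
  simp

lemma hn_unique {X : A} {r₁ r₂ : ℕ} {obj₁ obj₂ : ℕ → A}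
    {map₁ : ∀ i, obj₁ i ⟶ obj₁ (i + 1)} {map₂ : ∀ i, obj₂ i ⟶ obj₂ (i + 1)}
    {t₁ t₂ : ℕ → unitInterval}
    (h₁ : IsHNFiltration A η X r₁ obj₁ map₁ t₁) (h₂ : IsHNFiltration A η X r₂ obj₂ map₂ t₂) :
    r₁ = r₂ ∧ (∀ i, i < r₁ → t₁ i = t₂ i) ∧
      ∀ i, i ≤ r₁ → Nonempty (obj₁ i ≅ obj₂ i) := by
  obtain ⟨Q₁, p₁, hd₁⟩ := hn_data h₁
  obtain ⟨Q₂, p₂, hd₂⟩ := hn_data h₂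
  have hX₁ : obj₁ r₁ = X := h₁.2.1
  have hX₂ : obj₂ r₂ = X := h₂.2.1
  have hm₁ : ∀ a, a < r₁ → Mono (map₁ a) := fun a ha => (hd₁ a ha).2.mono
  have hm₂ : ∀ a, a < r₂ → Mono (map₂ a) := fun a ha => (hd₂ a ha).2.mono
  have main : ∀ n, n ≤ r₁ → n ≤ r₂ → (∀ j, j < n → t₁ j = t₂ j) ∧
      ∃ φ : obj₁ n ≅ obj₂ n, φ.hom ≫ inclX map₂ r₂ hX₂ n = inclX map₁ r₁ hX₁ n := by
    intro n
    induction n with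
    | zero =>
      intro _ _
      exact ⟨fun j hj => absurd hj (Nat.not_lt_zero j),
        h₁.1.isoZero.trans h₂.1.isoZero.symm, h₁.1.eq_of_src _ _⟩
    | succ n ih =>
      intro hn1 hn2
      have hn1' : n < r₁ := by omega
      have hn2' : n < r₂ := by omega
      obtain ⟨hts, φ, hφ⟩ := ih (by omega) (by omega)
      have hinv : φ.inv ≫ inclX map₁ r₁ hX₁ n = inclX map₂ r₂ hX₂ n := by
        rw [← hφ, ← Category.assoc, φ.inv_hom_id, Category.id_comp]
      have hteq : t₁ n = t₂ n := by
        by_contra hne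
        rcases lt_or_gt_of_ne hne with h | h
        · exact key_step hη h₂ h₁ Q₂ p₂ hd₂ Q₁ p₁ hd₁ n hn2' hn1' φ.symm hinv h
        · exact key_step hη h₁ h₂ Q₁ p₁ hd₁ Q₂ p₂ hd₂ n hn1' hn2' φ hφ h
      obtain ⟨ψ, hψ⟩ := step_iso hη h₁ h₂ Q₁ p₁ hd₁ Q₂ p₂ hd₂ n hn1' hn2' hteq
      obtain ⟨ψ', hψ'⟩ := step_iso hη h₂ h₁ Q₂ p₂ hd₂ Q₁ p₁ hd₁ n hn2' hn1' hteq.symm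
      haveI hmI₁ := inclX_mono map₁ hX₁ hm₁ (Nat.succ_le_of_lt hn1')
      haveI hmI₂ := inclX_mono map₂ hX₂ hm₂ (Nat.succ_le_of_lt hn2')
      have hψψ' : ψ ≫ ψ' = 𝟙 _ := by
        apply (cancel_mono (inclX map₁ r₁ hX₁ (n + 1))).mp
        rw [Category.assoc, hψ', hψ, Category.id_comp]
      have hψ'ψ : ψ' ≫ ψ = 𝟙 _ := by
        apply (cancel_mono (inclX map₂ r₂ hX₂ (n + 1))).mp
        rw [Category.assoc, hψ, hψ', Category.id_comp]
      refine ⟨?_, ⟨ψ, ψ', hψψ', hψ'ψ⟩, hψ⟩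
      intro j hj
      rcases Nat.lt_succ_iff_lt_or_eq.mp hj with h | h
      · exact hts j h
      · rw [h]; exact hteq
  -- lengths agree
  have len : ∀ {s₁ s₂ : ℕ} {o₁ o₂ : ℕ → A} {m₁ : ∀ i, o₁ i ⟶ o₁ (i + 1)}
      {m₂ : ∀ i, o₂ i ⟶ o₂ (i + 1)} {u₁ u₂ : ℕ → unitInterval}
      (g₁ : IsHNFiltration A η X s₁ o₁ m₁ u₁) (g₂ : IsHNFiltration A η X s₂ o₂ m₂ u₂)
      (R₂ : ℕ → A) (P₂ : ∀ i, o₂ (i + 1) ⟶ R₂ i)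
      (gd₂ : ∀ i, i < s₂ → R₂ i ∈ sliceP A η (u₂ i) ∧ SES A (m₂ i) (P₂ i))
      (φ : o₁ s₁ ≅ o₂ s₁)
      (hφ : φ.hom ≫ inclX m₂ s₂ g₂.2.1 s₁ = inclX m₁ s₁ g₁.2.1 s₁), ¬ (s₁ < s₂) := by
    intro s₁ s₂ o₁ o₂ m₁ m₂ u₁ u₂ g₁ g₂ R₂ P₂ gd₂ φ hφ hlt
    have gX₁ : o₁ s₁ = X := g₁.2.1
    have gX₂ : o₂ s₂ = X := g₂.2.1
    have gm₂ : ∀ a, a < s₂ → Mono (m₂ a) := fun a ha => (gd₂ a ha).2.mono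
    have hI₁ : inclX m₁ s₁ gX₁ s₁ = eqToHom gX₁ := inclX_self m₁ s₁ gX₁
    haveI : IsIso (inclX m₂ s₂ gX₂ s₁) := by
      have : inclX m₂ s₂ gX₂ s₁ = φ.inv ≫ eqToHom gX₁ := by
        rw [← hI₁, ← hφ, ← Category.assoc, φ.inv_hom_id, Category.id_comp]
      rw [this]
      infer_instance
    have hstep : inclX m₂ s₂ gX₂ s₁ = m₂ s₁ ≫ inclX m₂ s₂ gX₂ (s₁ + 1) :=
      inclX_of_lt m₂ gX₂ hlt
    haveI hmono := inclX_mono m₂ gX₂ gm₂ (Nat.succ_le_of_lt hlt)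
    have hsplit : (inv (inclX m₂ s₂ gX₂ s₁) ≫ m₂ s₁) ≫ inclX m₂ s₂ gX₂ (s₁ + 1) = 𝟙 _ := by
      rw [Category.assoc, ← hstep, IsIso.inv_hom_id]
    haveI : IsSplitEpi (inclX m₂ s₂ gX₂ (s₁ + 1)) := ⟨⟨⟨_, hsplit⟩⟩⟩
    haveI : IsIso (inclX m₂ s₂ gX₂ (s₁ + 1)) := isIso_of_mono_of_epi _
    have : IsIso (m₂ s₁) := by
      have hme : m₂ s₁ = inclX m₂ s₂ gX₂ s₁ ≫ inv (inclX m₂ s₂ gX₂ (s₁ + 1)) := by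
        rw [hstep, Category.assoc, IsIso.hom_inv_id, Category.comp_id]
      rw [hme]
      infer_instance
    exact sliceP_nonzero hη (gd₂ s₁ hlt).1 ((gd₂ s₁ hlt).2.isZero_of_isIso_f this)
  have hr : r₁ = r₂ := by
    by_contra hne
    rcases lt_or_gt_of_ne hne with h | h
    · obtain ⟨_, φ, hφ⟩ := main r₁ (le_refl r₁) (le_of_lt h)
      exact len h₁ h₂ Q₂ p₂ hd₂ φ hφ h
    · obtain ⟨_, φ, hφ⟩ := main r₂ (le_of_lt h) (le_refl r₂)
      have hinv : φ.inv ≫ inclX map₁ r₁ hX₁ r₂ = inclX map₂ r₂ hX₂ r₂ := by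
        rw [← hφ, ← Category.assoc, φ.inv_hom_id, Category.id_comp]
      exact len h₂ h₁ Q₁ p₁ hd₁ φ.symm hinv h
  refine ⟨hr, (main r₁ (le_refl r₁) (hr ▸ le_refl r₁)).1, fun i hi => ?_⟩
  obtain ⟨_, φ, _⟩ := main i hi (hr ▸ hi)
  exact ⟨φ⟩

end Uniq

section Exist
variable {η : unitInterval → Set A} (hη : IsChainOfTorsionClasses A η)

lemma ses_eq_transport {X X' Y Y' Z : A} (hx : X = X') (hy : Y = Y')
    {f : X ⟶ Y} {g : Y ⟶ Z} (h : SES A f g) :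
    SES A (eqToHom hx.symm ≫ f ≫ eqToHom hy) (eqToHom hy.symm ≫ g) := by
  subst hx
  subst hy
  simpa using h

omit hη in
lemma hn_append {W Y Q : A} {r : ℕ} {obj : ℕ → A} {map : ∀ i, obj i ⟶ obj (i + 1)}
    {t : ℕ → unitInterval} (h : IsHNFiltration A η W r obj map t)
    (ι : W ⟶ Y) (p : Y ⟶ Q) (hses : SES A ι p) {s : unitInterval}
    (hQ : Q ∈ sliceP A η s) (hs : ∀ i, i < r → s < t i) :
    ∃ (obj2 : ℕ → A) (map2 : ∀ i, obj2 i ⟶ obj2 (i + 1)) (t2 : ℕ → unitInterval),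
      IsHNFiltration A η Y (r + 1) obj2 map2 t2 ∧ (∀ i, i < r → t2 i = t i) ∧ t2 r = s := by
  classical
  obtain ⟨Qd, pd, hdd⟩ := hn_data h
  set obj2 : ℕ → A := fun i => if i ≤ r then obj i else Y with hobj2
  have e1 : ∀ i, i ≤ r → obj i = obj2 i := fun i h => (if_pos h).symm
  have e2 : ∀ i, ¬ i ≤ r → Y = obj2 i := fun i h => (if_neg h).symm
  have eW : W = obj2 r := (h.2.1.symm).trans (e1 r (le_refl r))
  set map2 : ∀ i, obj2 i ⟶ obj2 (i + 1) := fun i =>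
    if hi : i + 1 ≤ r then
      eqToHom (e1 i (by omega)).symm ≫ map i ≫ eqToHom (e1 (i + 1) hi)
    else if hi' : i = r then
      eqToHom (((congrArg obj2 hi').trans eW.symm)) ≫ ι ≫ eqToHom (e2 (i + 1) (by omega))
    else
      eqToHom ((e2 i (by omega)).symm.trans (e2 (i + 1) (by omega)))
    with hmap2
  set t2 : ℕ → unitInterval := fun i => if i < r then t i else s with ht2
  have ht2a : ∀ i, i < r → t2 i = t i := fun i h => if_pos h
  have ht2b : t2 r = s := if_neg (lt_irrefl r)
  refine ⟨obj2, map2, t2, ⟨?_, (e2 (r + 1) (by omega)).symm, ?_, ?_⟩, ht2a, ht2b⟩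
  · rw [show obj2 0 = obj 0 from (e1 0 (Nat.zero_le r)).symm]
    exact h.1
  · intro i j hij hj
    rcases (by omega : j < r ∨ j = r) with hc | hc
    · rw [ht2a j hc, ht2a i (by omega)]
      exact h.2.2.1 i j hij (by omega)
    · subst hc
      rw [ht2b, ht2a i (by omega)]
      exact hs i (by omega)
  · intro i hi
    rcases (by omega : i < r ∨ i = r) with hc | hc
    · refine ⟨Qd i, eqToHom (e1 (i + 1) (by omega)).symm ≫ pd i, ?_, ?_⟩
      · rw [ht2a i hc]
        exact (hdd i hc).1
      · have hm : map2 i = eqToHom (e1 i (by omega)).symm ≫ map i ≫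
            eqToHom (e1 (i + 1) (by omega)) := by
          simp only [hmap2]
          rw [dif_pos (by omega : i + 1 ≤ r)]
        rw [hm]
        exact ses_eq_transport (e1 i (by omega)) (e1 (i + 1) (by omega)) (hdd i hc).2
    · subst hc
      refine ⟨Q, eqToHom (e2 (i + 1) (by omega)).symm ≫ p, ?_, ?_⟩
      · rw [ht2b]
        exact hQ
      · have hm : map2 i = eqToHom eW.symm ≫ ι ≫ eqToHom (e2 (i + 1) (by omega)) := by
          simp only [hmap2]
          rw [dif_neg (by omega : ¬ i + 1 ≤ i)]
          simp
        rw [hm]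
        exact ses_eq_transport eW (e2 (i + 1) (by omega)) hses

lemma hn_exists (hlen : IsLengthCategory A) (X : A) (N : Subobject X) :
    ∀ (Y : A), (Subobject.underlying.obj N ≅ Y) → ¬ IsZero Y →
      ∃ (r : ℕ) (obj : ℕ → A) (map : ∀ i, obj i ⟶ obj (i + 1)) (t : ℕ → unitInterval),
        IsHNFiltration A η Y r obj map t ∧ 1 ≤ r ∧ ∀ i, i < r → rho hη Y ≤ t i := by
  haveI hwf := (hlen X).1
  induction N using WellFoundedLT.induction with
  | _ N IH =>
  intro Y e hY
  set ρY := rho hη Y with hρY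
  haveI := (hlen Y).2
  obtain ⟨tm, htmT, hperp⟩ := exists_torsion_subobject (uGTc_quot η hη ρY)
    (uGTc_ext η hη ρY) (uGTc_zeros η hη ρY) Y
  set ι := tm.arrow with hι
  have hses : SES A ι (cokernel.π ι) := ses_cokernel ι
  have hslice : cokernel ι ∈ sliceP A η ρY :=
    ⟨Y, (Subobject.underlying.obj tm), ι, cokernel.π ι, mem_interLT_rho hη Y,
      not_mem_unionGTc_rho hη hY, htmT, hperp, hses⟩
  have hQnz : ¬ IsZero (cokernel ι) := sliceP_nonzero hη hslice
  by_cases htz : IsZero (Subobject.underlying.obj tm)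
  · refine ⟨1, fun i => Nat.casesOn i (Subobject.underlying.obj tm) (fun _ => Y),
      fun i => Nat.casesOn i ι (fun _ => 𝟙 Y), fun _ => ρY,
      ⟨htz, rfl, fun i j hij hj => absurd hij (by omega), ?_⟩, le_refl 1,
      fun i _ => le_refl ρY⟩
    intro i hi
    obtain rfl : i = 0 := by omega
    exact ⟨cokernel ι, cokernel.π ι, hslice, hses⟩
  · have hrtm : ρY < rho hη (Subobject.underlying.obj tm) := by
      rcases (mem_unionGTc_iff η ρY _).mp htmT with h | ⟨r', hr', hmem⟩
      · exact absurd h htz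
      · exact lt_of_lt_of_le hr' (le_rho hη hmem)
    set f := ι ≫ e.inv ≫ N.arrow with hf
    haveI : Mono f := by
      rw [hf]
      infer_instance
    have hle : Subobject.mk f < N := by
      have h1 : Subobject.mk f ≤ N := by
        conv_rhs => rw [← Subobject.mk_arrow N]
        exact Subobject.mk_le_mk_of_comm (ι ≫ e.inv) (by simp [hf])
      refine lt_of_le_of_ne h1 ?_
      intro heq
      have h2 : N ≤ Subobject.mk f := le_of_eq heq.symm
      have hw : Subobject.ofLEMk N f h2 ≫ f = N.arrow := Subobject.ofLEMk_comp h2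
      have h3 : Subobject.ofLEMk N f h2 ≫ ι ≫ e.inv = 𝟙 _ := by
        apply (cancel_mono N.arrow).mp
        simpa [hf, Category.assoc] using hw
      have h4 : Subobject.ofLEMk N f h2 ≫ ι = e.hom := by
        have := congrArg (· ≫ e.hom) h3
        simpa [Category.assoc] using this
      have hsplit : (e.inv ≫ Subobject.ofLEMk N f h2) ≫ ι = 𝟙 Y := by
        rw [Category.assoc, h4, e.inv_hom_id]
      haveI : IsSplitEpi ι := ⟨⟨⟨_, hsplit⟩⟩⟩
      haveI : IsIso ι := isIso_of_mono_of_epi _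
      exact hQnz (hses.isZero_of_isIso_f this)
    obtain ⟨r', obj', map', t', hHN', hr', hpar⟩ :=
      IH (Subobject.mk f) hle (Subobject.underlying.obj tm) (Subobject.underlyingIso f) htz
    have hs : ∀ i, i < r' → ρY < t' i := fun i hi => lt_of_lt_of_le hrtm (hpar i hi)
    obtain ⟨obj2, map2, t2, hHN2, ht2a, ht2b⟩ :=
      hn_append hHN' ι (cokernel.π ι) hses hslice hs
    refine ⟨r' + 1, obj2, map2, t2, hHN2, by omega, fun i hi => ?_⟩
    rcases (by omega : i < r' ∨ i = r') with hc | hc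
    · rw [ht2a i hc]
      exact le_of_lt (hs i hc)
    · subst hc
      rw [ht2b]

end Exist

end Aux

/-- Every nonzero object of the abelian length category `A` admits a
Harder-Narasimhan filtration with respect to a chain of torsion classes `η`, with
successive quotients in the slices `P_{t i}` for strictly decreasing parameters, and
this filtration is unique up to isomorphism. -/
theorem hn_filtration_exists_unique
    [EssentiallySmall.{v} A] (hlen : IsLengthCategory A)
    (η : unitInterval → Set A) (hη : IsChainOfTorsionClasses A η)
    (X : A) (hX : ¬ IsZero X) :
    (∃ (r : ℕ) (obj : ℕ → A) (map : ∀ i, obj i ⟶ obj (i + 1)) (t : ℕ → unitInterval),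
      IsHNFiltration A η X r obj map t) ∧
    (∀ (r₁ r₂ : ℕ) (obj₁ obj₂ : ℕ → A)
      (map₁ : ∀ i, obj₁ i ⟶ obj₁ (i + 1)) (map₂ : ∀ i, obj₂ i ⟶ obj₂ (i + 1))
      (t₁ t₂ : ℕ → unitInterval),
      IsHNFiltration A η X r₁ obj₁ map₁ t₁ → IsHNFiltration A η X r₂ obj₂ map₂ t₂ →
      r₁ = r₂ ∧ (∀ i, i < r₁ → t₁ i = t₂ i) ∧
        ∀ i, i ≤ r₁ → Nonempty (obj₁ i ≅ obj₂ i)) := by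
  constructor
  · obtain ⟨r, obj, map, t, hHN, _, _⟩ :=
      hn_exists hη hlen X (Subobject.mk (𝟙 X)) X (Subobject.underlyingIso (𝟙 X)) hX
    exact ⟨r, obj, map, t, hHN⟩
  · intro r₁ r₂ obj₁ obj₂ map₁ map₂ t₁ t₂ h1 h2
    exact hn_unique hη h1 h2

end TorsionPaper
end

section
/- Let M be an n-cluster-tilting subcategory of an abelian category A and U an n-torsion class in M. Then for every object X of M, the n-torsion subobject U^X of X with respect to U is isomorphic to the torsion subobject tX of X with respect to the minimal torsion class T(U) of A containing U. -/
open CategoryTheory CategoryTheory.Limits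

universe w v u u' v' uG

set_option linter.dupNamespace false

namespace TorsionPaper

variable (A : Type u) [Category.{v} A] [Abelian A]
/-- A sequence of objects and morphisms `obj 0 → obj 1 → obj 2 → ⋯` in `A`. -/
structure Seq where
  obj : ℕ → A
  map : ∀ i, obj i ⟶ obj (i + 1)

variable {A}

/-- Exactness of the induced complex
`0 → Hom(U', V^1) → Hom(U', V^2) → ⋯ → Hom(U', V^n) → 0`, where
`V^i = S.obj (i + 2)` for `1 ≤ i ≤ n`. -/
def HomSeqExact (U' : A) (S : Seq A) (n : ℕ) : Prop :=
  ∀ i, 1 ≤ i → i ≤ n →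
    ∀ f : U' ⟶ S.obj (i + 2),
      (i < n → f ≫ S.map (i + 2) = 0) →
      (if i = 1 then f = 0 else ∃ g : U' ⟶ S.obj (i + 1), g ≫ S.map (i + 1) = f)

variable (A)

/-- `S` encodes the fundamental `n`-exact sequence
`0 → U^X → X → V^1 → ⋯ → V^n → 0` of `X` with respect to `U`:
here `S.obj 0` and `S.obj (n+3)` are zero, `S.obj 1 = U^X ∈ U`, `S.obj 2 = X`,
`S.obj (i+2) = V^i ∈ MM`, the sequence is exact (as a sequence in the ambient
abelian category, all of whose terms lie in the `n`-cluster-tilting subcategory `MM`),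
and `0 → Hom(U', V^1) → ⋯ → Hom(U', V^n) → 0` is exact for every `U' ∈ U`. -/
def IsNTorsionSequenceFor (n : ℕ) (MM U : Set A) (X : A) (S : Seq A) : Prop :=
  IsZero (S.obj 0) ∧ IsZero (S.obj (n + 3)) ∧
  S.obj 1 ∈ U ∧ S.obj 2 = X ∧
  (∀ i, 3 ≤ i → i ≤ n + 2 → S.obj i ∈ MM) ∧
  (∀ i, i ≤ n + 1 → IsExactAt A (S.map i) (S.map (i + 1))) ∧
  (∀ U' ∈ U, HomSeqExact U' S n)

/-- `U` is an `n`-torsion class in the `n`-cluster-tilting subcategory `MM`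
(Jørgensen's definition): every `X ∈ MM` admits a fundamental `n`-exact sequence. -/
def IsNTorsionClass (n : ℕ) (MM U : Set A) : Prop :=
  U ⊆ MM ∧ ∀ X ∈ MM, ∃ S : Seq A, IsNTorsionSequenceFor A n MM U X S

/-- `ι : UX ⟶ X` exhibits `UX` as the `n`-torsion subobject of `X` with respect to
the `n`-torsion class `U`. -/
def IsNTorsionSubobject (n : ℕ) (MM U : Set A) (X UX : A) (ι : UX ⟶ X) : Prop :=
  ∃ (S : Seq A) (h1 : S.obj 1 = UX) (h2 : S.obj 2 = X),
    IsNTorsionSequenceFor A n MM U X S ∧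
    eqToHom h1.symm ≫ S.map 1 ≫ eqToHom h2 = ι

/-- `MM` is generating: every object is a quotient of an object of `MM`. -/
def Generating (MM : Set A) : Prop := Fac A MM = Set.univ

/-- `MM` is cogenerating: every object is a subobject of an object of `MM`. -/
def Cogenerating (MM : Set A) : Prop := SubOf A MM = Set.univ

/-- `MM` is an `n`-cluster-tilting subcategory of the abelian category `A`:
functorially finite, generating-cogenerating, and given by the vanishing of
`Ext^i` for `1 ≤ i ≤ n - 1` on either side. -/
def IsNClusterTilting [HasExt.{w} A] (n : ℕ) (MM : Set A) : Prop :=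
  FunctoriallyFinite A MM ∧ Generating A MM ∧ Cogenerating A MM ∧
  (∀ X : A, X ∈ MM ↔ ∀ Y ∈ MM, ∀ i, 1 ≤ i → i ≤ n - 1 → Subsingleton (Abelian.Ext X Y i)) ∧
  (∀ Y : A, Y ∈ MM ↔ ∀ X ∈ MM, ∀ i, 1 ≤ i → i ≤ n - 1 → Subsingleton (Abelian.Ext X Y i))

/-- A chain of `n`-torsion classes in `MM` indexed by `[0,1]`:
`U_0 = MM`, `U_1 = {0}`, order-reversing. -/
def IsChainOfNTorsionClasses (n : ℕ) (MM : Set A) (δ : unitInterval → Set A) : Prop :=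
  (∀ s, IsNTorsionClass A n MM (δ s)) ∧ δ 0 = MM ∧ δ 1 = {Z : A | IsZero Z} ∧
  ∀ r s : unitInterval, r ≤ s → δ s ⊆ δ r

/-- `(r, obj, map, t)` is an `n`-Harder-Narasimhan filtration of `X` with respect to
the chain of `n`-torsion classes `δ`: a strict filtration
`0 = obj 0 ⊊ obj 1 ⊊ ⋯ ⊊ obj r = X` with strictly decreasing parameters `t i` such
that `obj (i+1)` lies in `(⋂_{s < t i} U_s) \ (⋃_{s > t i} U_s)` and `obj i` is the
`n`-torsion subobject of `obj (i+1)` with respect to `⋃_{s > t i} U_s`; in particular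
the `n`-cokernel of `obj i → obj (i+1)` lies in the slice `Q_{t i}`. -/
def IsNHNFiltration (n : ℕ) (MM : Set A) (δ : unitInterval → Set A) (X : A)
    (r : ℕ) (obj : ℕ → A) (map : ∀ i, obj i ⟶ obj (i + 1)) (t : ℕ → unitInterval) : Prop :=
  IsZero (obj 0) ∧ obj r = X ∧
  (∀ i j, i < j → j < r → t j < t i) ∧
  ∀ i, i < r →
    obj (i + 1) ∈ interLTc A MM δ (t i) ∧ obj (i + 1) ∉ unionGTc A δ (t i) ∧
    ¬ IsIso (map i) ∧
    IsNTorsionSubobject A n MM (unionGTc A δ (t i)) (obj (i + 1)) (obj i) (map i)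

/-- Lemma 3.1. For an `n`-torsion class `U` in the `n`-cluster-tilting
subcategory `MM` of `A`, the `n`-torsion subobject of any `X ∈ MM` with respect to `U`
is isomorphic (compatibly with the inclusions into `X`) to the torsion subobject of `X`
with respect to the minimal torsion class `T(U)` of `A` containing `U`. -/
theorem n_torsion_subobject_iso_torsion_subobject
    [HasExt.{w} A] [EssentiallySmall.{v} A] (hlen : IsLengthCategory A)
    (n : ℕ) (hn : 1 ≤ n) (MM U : Set A)
    (hM : IsNClusterTilting A n MM) (hU : IsNTorsionClass A n MM U)
    (X : A) (hX : X ∈ MM)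
    (UX : A) (ι : UX ⟶ X) (hι : IsNTorsionSubobject A n MM U X UX ι)
    (tX fX : A) (ιt : tX ⟶ X) (p : X ⟶ fX)
    (ht : tX ∈ TT A U) (hf : fX ∈ rperp A (TT A U)) (hses : SES A ιt p) :
    ∃ e : UX ≅ tX, e.hom ≫ ιt = ι := by
  obtain ⟨S, h1, h2, hS, hmap⟩ := hι
  subst h1; subst h2
  rw [eqToHom_refl, eqToHom_refl, Category.id_comp, Category.comp_id] at hmap
  subst hmap
  obtain ⟨hz0, -, hU1, -, -, hex, hhom⟩ := hS
  -- `S.map 1` is a monomorphism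
  obtain ⟨w01, e01⟩ := hex 0 (by omega)
  haveI hm1 : Mono (S.map 1) := e01.mono_g (hz0.eq_of_src _ _)
  -- the cokernel of `S.map 1` embeds into `V¹ = S.obj 3`
  obtain ⟨w12, e12⟩ := hex 1 (by omega)
  haveI hmj : Mono (cokernel.desc (S.map 1) (S.map 2) w12) :=
    (ShortComplex.exact_iff_mono_cokernel_desc (ShortComplex.mk (S.map 1) (S.map 2) w12)).1 e12
  obtain ⟨w23, -⟩ := hex 2 (by omega)
  have hj3 : cokernel.desc (S.map 1) (S.map 2) w12 ≫ S.map 3 = 0 :=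
    zero_of_epi_comp (cokernel.π (S.map 1)) (by
      rw [← Category.assoc, cokernel.π_desc, w23])
  -- every map from an object of `U` to the cokernel is zero
  have hperpU : ∀ U' ∈ U, ∀ f : U' ⟶ cokernel (S.map 1), f = 0 := by
    intro U' hU' f
    have hf3 : (1 : ℕ) < n →
        (f ≫ cokernel.desc (S.map 1) (S.map 2) w12) ≫ S.map (1 + 2) = 0 := fun _ => by
      rw [Category.assoc]
      show f ≫ (cokernel.desc (S.map 1) (S.map 2) w12 ≫ S.map 3) = 0
      rw [hj3, comp_zero]
    have h0 := hhom U' hU' 1 le_rfl hn (f ≫ cokernel.desc (S.map 1) (S.map 2) w12) hf3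
    rw [if_pos rfl] at h0
    rw [← cancel_mono (cokernel.desc (S.map 1) (S.map 2) w12), zero_comp]
    exact h0
  -- the left perpendicular of the cokernel is a torsion class containing `U`
  have hTC : IsTorsionClass A {T : A | ∀ f : T ⟶ cokernel (S.map 1), f = 0} := by
    constructor
    · intro X' Y' q hq hX' g
      rw [← cancel_epi q, comp_zero]
      exact hX' _
    · intro X' Y' Z' f g hsesfg hX' hZ' h
      obtain ⟨w, hse⟩ := hsesfg
      haveI := hse.epi_g
      have hfh : f ≫ h = 0 := hX' _
      have hdesc := hse.exact.g_desc h hfh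
      rw [← hdesc, hZ' (hse.exact.desc h hfh), comp_zero]
  have htX0 : ∀ f : tX ⟶ cokernel (S.map 1), f = 0 :=
    Set.mem_sInter.1 ht _ ⟨hTC, fun U' hU' => hperpU U' hU'⟩
  -- factor `ιt` through `S.map 1`
  have hιtπ : ιt ≫ cokernel.π (S.map 1) = 0 := htX0 _
  have hv : Abelian.monoLift (S.map 1) ιt hιtπ ≫ S.map 1 = ιt :=
    Abelian.monoLift_comp _ _ _
  -- factor `S.map 1` through `ιt`
  obtain ⟨wtp, hsetp⟩ := hses
  haveI := hsetp.mono_f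
  have hU1T : S.obj 1 ∈ TT A U := Set.mem_sInter.2 fun T hT => hT.2 hU1
  have hι_p : S.map 1 ≫ p = 0 := hf _ hU1T _
  have hu : hsetp.exact.lift (S.map 1) hι_p ≫ ιt = S.map 1 :=
    hsetp.exact.lift_f _ _
  refine ⟨⟨hsetp.exact.lift (S.map 1) hι_p, Abelian.monoLift (S.map 1) ιt hιtπ, ?_, ?_⟩, hu⟩
  · rw [← cancel_mono (S.map 1), Category.assoc, hv, hu, Category.id_comp]
  · rw [← cancel_mono ιt, Category.assoc, hu, hv, Category.id_comp]

end TorsionPaper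
end

section
/- Let U_1 ⊆ U_2 be two n-torsion classes in an n-abelian category M and X an object of M with n-torsion subobjects U_1^X and U_2^X with respect to U_1 and U_2. Then U_1^X is a subobject of U_2^X, and the n-torsion subobject of U_2^X with respect to U_1 is isomorphic to U_1^X. -/
open CategoryTheory CategoryTheory.Limits

universe w v u u' v' uG

set_option linter.dupNamespace false

namespace TorsionPaper

variable (A : Type u) [Category.{v} A] [Abelian A]
variable {A}

variable (A)

/-- Key properties of an `n`-torsion subobject: it lies in `U`, the inclusion is a
monomorphism, and every map from an object of `U` factors through it. -/
theorem torsion_subobject_props {A : Type u} [Category.{v} A] [Abelian A]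
    {n : ℕ} (hn : 1 ≤ n) {MM U : Set A} {X UX : A} {ι : UX ⟶ X}
    (h : IsNTorsionSubobject A n MM U X UX ι) :
    UX ∈ U ∧ Mono ι ∧ ∀ U' ∈ U, ∀ f : U' ⟶ X, ∃ g : U' ⟶ UX, g ≫ ι = f := by
  obtain ⟨S, h1, h2, ⟨hz0, hz3, hU, hX2, hMM, hex, hhom⟩, hι⟩ := h
  -- `S.map 1` is a monomorphism
  obtain ⟨c0, hex0⟩ := hex 0 (by omega)
  have hmap0 : S.map 0 = 0 := hz0.eq_of_src _ _
  have hmono1 : Mono (S.map 1) := hex0.mono_g hmap0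
  have hmonoι : Mono ι := by
    rw [← hι]
    exact mono_comp _ _
  refine ⟨h1 ▸ hU, hmonoι, ?_⟩
  intro U' hU' f
  -- work with `f₀ : U' ⟶ S.obj 2`
  set f₀ : U' ⟶ S.obj 2 := f ≫ eqToHom h2.symm with hf₀
  -- `f₀ ≫ S.map 2 = 0` via `HomSeqExact` at `i = 1`
  obtain ⟨c2, _⟩ := hex 2 (by omega)
  have hcomp : (f₀ ≫ S.map 2) ≫ S.map 3 = 0 := by
    rw [Category.assoc, c2, comp_zero]
  have hzero : f₀ ≫ S.map 2 = 0 := by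
    have := hhom U' hU' 1 le_rfl hn (f₀ ≫ S.map 2) (fun _ => hcomp)
    simpa using this
  -- lift through the exact sequence at `S.obj 2`
  obtain ⟨c1, hex1⟩ := hex 1 (by omega)
  haveI : Mono (ShortComplex.mk (S.map 1) (S.map 2) c1).f := hmono1
  refine ⟨hex1.lift f₀ hzero ≫ eqToHom h1, ?_⟩
  have hl : hex1.lift f₀ hzero ≫ S.map 1 = f₀ := hex1.lift_f f₀ hzero
  rw [← hι]
  simp only [Category.assoc, eqToHom_trans_assoc, eqToHom_refl, Category.id_comp]
  rw [← Category.assoc, hl, hf₀, Category.assoc, eqToHom_trans, eqToHom_refl,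
    Category.comp_id]

/-- Lemma 4.2. If `U₁ ⊆ U₂` are `n`-torsion classes in the
`n`-abelian category `MM` and `X ∈ MM`, then the `n`-torsion subobject `U₁^X` is a
subobject of `U₂^X` (compatibly with the inclusions into `X`), and the `n`-torsion
subobject of `U₂^X` with respect to `U₁` is isomorphic to `U₁^X`. -/
theorem n_torsion_subobjects_nested
    [HasExt.{w} A] [EssentiallySmall.{v} A] (hlen : IsLengthCategory A)
    (n : ℕ) (hn : 1 ≤ n) (MM : Set A) (hM : IsNClusterTilting A n MM)
    (U₁ U₂ : Set A) (hU₁ : IsNTorsionClass A n MM U₁) (hU₂ : IsNTorsionClass A n MM U₂)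
    (hsub : U₁ ⊆ U₂) (X : A) (hX : X ∈ MM)
    (U1X U2X : A) (ι₁ : U1X ⟶ X) (ι₂ : U2X ⟶ X)
    (h₁ : IsNTorsionSubobject A n MM U₁ X U1X ι₁)
    (h₂ : IsNTorsionSubobject A n MM U₂ X U2X ι₂) :
    (∃ m : U1X ⟶ U2X, Mono m ∧ m ≫ ι₂ = ι₁) ∧
    (∀ (Y : A) (κ : Y ⟶ U2X), IsNTorsionSubobject A n MM U₁ U2X Y κ →
      Nonempty (Y ≅ U1X)) := by
  obtain ⟨hU1mem, hmono1, hfac1⟩ := torsion_subobject_props hn h₁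
  obtain ⟨hU2mem, hmono2, hfac2⟩ := torsion_subobject_props hn h₂
  obtain ⟨m, hm⟩ := hfac2 U1X (hsub hU1mem) ι₁
  haveI := hmono1
  haveI := hmono2
  have hmonom : Mono m := by
    have : Mono (m ≫ ι₂) := hm ▸ hmono1
    exact mono_of_mono m ι₂
  refine ⟨⟨m, hmonom, hm⟩, ?_⟩
  intro Y κ hY
  obtain ⟨hYmem, hmonoκ, hfacY⟩ := torsion_subobject_props hn hY
  haveI := hmonoκ
  obtain ⟨a, ha⟩ := hfacY U1X hU1mem m
  obtain ⟨b, hb⟩ := hfac1 Y hYmem (κ ≫ ι₂)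
  have hbm : b ≫ m = κ := by
    have : (b ≫ m) ≫ ι₂ = κ ≫ ι₂ := by rw [Category.assoc, hm, hb]
    exact (cancel_mono ι₂).1 this
  refine ⟨⟨b, a, ?_, ?_⟩⟩
  · have : (b ≫ a) ≫ κ = 𝟙 Y ≫ κ := by
      rw [Category.assoc, ha, hbm, Category.id_comp]
    exact (cancel_mono κ).1 this
  · have : (a ≫ b) ≫ ι₁ = 𝟙 U1X ≫ ι₁ := by
      rw [Category.assoc, hb, ← Category.assoc, ha, hm, Category.id_comp]
    exact (cancel_mono ι₁).1 this

end TorsionPaper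
end
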